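/- Let F be a regular flow on ℝ² and let s₁, s₂ be two distinct orbits of F. Then s₁ is inseparable from s₂ if and only if, possibly after exchanging s₁ and s₂, for every p ∈ s₁ and every q ∈ s₂ one has (p, q) ∈ P_F. -/

import Mathlib

open Set Filter Topology

/-- A (continuous-time) flow on a topological space. -/
def IsFlow {X : Type*} [TopologicalSpace X] (F : ℝ → X → X) : Prop :=
  Continuous (fun q : ℝ × X => F q.1 q.2) ∧ (∀ x, F 0 x = x) ∧
    ∀ t s x, F t (F s x) = F (t + s) x

/-- The forward orbit O⁺(p). -/
def fwdOrbit {X : Type*} (F : ℝ → X → X) (p : X) : Set X :=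
  {q | ∃ t : ℝ, 0 ≤ t ∧ F t p = q}

/-- The backward orbit O⁻(p). -/
def bwdOrbit {X : Type*} (F : ℝ → X → X) (p : X) : Set X :=
  {q | ∃ t : ℝ, t ≤ 0 ∧ F t p = q}

/-- The orbit O(p) = O⁻(p) ∪ O⁺(p). -/
def flowOrbit {X : Type*} (F : ℝ → X → X) (p : X) : Set X :=
  bwdOrbit F p ∪ fwdOrbit F p

/-- The orbit relation O_F. -/
def orbitRel {X : Type*} (F : ℝ → X → X) : Set (X × X) :=
  {z | z.2 ∈ fwdOrbit F z.1}

/-- The prolongational relation P_F: the closure of the orbit relation. -/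
def prolongRel {X : Type*} [TopologicalSpace X] (F : ℝ → X → X) : Set (X × X) :=
  closure (orbitRel F)

/-- Down(p) = {q | (p,q) ∈ P_F}. -/
def downSet {X : Type*} [TopologicalSpace X] (F : ℝ → X → X) (p : X) : Set X :=
  {q | (p, q) ∈ prolongRel F}

/-- The first prolongational limit set Λ¹(p). -/
def lambda1 {X : Type*} [MetricSpace X] (F : ℝ → X → X) (p : X) : Set X :=
  {q | ∀ ε > (0 : ℝ), ∀ T > (0 : ℝ), ∃ x : X, ∃ t : ℝ,
    T ≤ t ∧ dist x p < ε ∧ dist (F t x) q < ε}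

/-- The first prolongation D¹(p). -/
def prolong1 {X : Type*} [MetricSpace X] (F : ℝ → X → X) (p : X) : Set X :=
  {q | ∀ ε > (0 : ℝ), ∃ x : X, ∃ t : ℝ, 0 < t ∧ dist x p < ε ∧ dist (F t x) q < ε}

/-- The set NW_F of non-wandering points. -/
def nonWanderingSet {X : Type*} [MetricSpace X] (F : ℝ → X → X) : Set X :=
  {p | p ∈ lambda1 F p}

/-- A flow is wandering when it has no non-wandering point. -/
def IsWandering {X : Type*} [MetricSpace X] (F : ℝ → X → X) : Prop :=
  nonWanderingSet F = ∅

/-- The ω-limit set of p. -/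
def omegaLimitSet {X : Type*} [TopologicalSpace X] (F : ℝ → X → X) (p : X) : Set X :=
  {q | ∃ t : ℕ → ℝ, Tendsto t atTop atTop ∧ Tendsto (fun n => F (t n) p) atTop (𝓝 q)}

/-- The α-limit set of p. -/
def alphaLimitSet {X : Type*} [TopologicalSpace X] (F : ℝ → X → X) (p : X) : Set X :=
  {q | ∃ t : ℕ → ℝ, Tendsto t atTop atBot ∧ Tendsto (fun n => F (t n) p) atTop (𝓝 q)}

/-- The plane with the Euclidean distance. -/
abbrev Plane := EuclideanSpace ℝ (Fin 2)

/-- A flow on the plane is regular if near every point it is locally topologically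
equivalent to the flow of a constant vector field: there is a homeomorphism of a
neighborhood onto an open set sending the local orbits into horizontal lines. -/
def IsRegularFlow (F : ℝ → Plane → Plane) : Prop :=
  ∀ p : Plane, ∃ U V : Set Plane, IsOpen U ∧ IsOpen V ∧ p ∈ U ∧
    ∃ φ : U ≃ₜ V, ∀ q y : U, (y : Plane) ∈ flowOrbit F (q : Plane) →
      (φ y : Plane) 1 = (φ q : Plane) 1

/-- A set is saturated if it contains the full orbit of each of its points. -/
def FlowSaturated (F : ℝ → Plane → Plane) (A : Set Plane) : Prop :=
  ∀ p ∈ A, flowOrbit F p ⊆ A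

/-- Two (distinct) orbits are inseparable if any two saturated open sets containing
them respectively must intersect. -/
def OrbitsInseparable (F : ℝ → Plane → Plane) (s₁ s₂ : Set Plane) : Prop :=
  ∀ U₁ U₂ : Set Plane, IsOpen U₁ → IsOpen U₂ → FlowSaturated F U₁ → FlowSaturated F U₂ →
    s₁ ⊆ U₁ → s₂ ⊆ U₂ → (U₁ ∩ U₂).Nonempty

/-- s is an orbit of F. -/
def IsOrbit (F : ℝ → Plane → Plane) (s : Set Plane) : Prop :=
  ∃ a : Plane, s = flowOrbit F a

/-- A separatrix: an orbit inseparable from some other orbit. -/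
def IsSeparatrix (F : ℝ → Plane → Plane) (s : Set Plane) : Prop :=
  IsOrbit F s ∧ ∃ s' : Set Plane, IsOrbit F s' ∧ s' ≠ s ∧ OrbitsInseparable F s s'

/-- s₁ ≻ s₂ : the distinct inseparable orbits s₁, s₂ satisfy (p,q) ∈ P_F for some
p ∈ s₁, q ∈ s₂. -/
def OrbPrec (F : ℝ → Plane → Plane) (s₁ s₂ : Set Plane) : Prop :=
  s₁ ≠ s₂ ∧ OrbitsInseparable F s₁ s₂ ∧ ∃ p ∈ s₁, ∃ q ∈ s₂, (p, q) ∈ prolongRel F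

section Aux

variable {F : ℝ → Plane → Plane}

lemma flow_map_continuous (hF : IsFlow F) (t : ℝ) : Continuous fun x => F t x :=
  hF.1.comp (continuous_const.prodMk continuous_id)

lemma mem_flowOrbit_iff {p q : Plane} : q ∈ flowOrbit F p ↔ ∃ s : ℝ, F s p = q := by
  constructor
  · rintro (⟨t, _, h⟩ | ⟨t, _, h⟩) <;> exact ⟨t, h⟩
  · rintro ⟨s, h⟩
    rcases le_total s 0 with hs | hs
    · exact Or.inl ⟨s, hs, h⟩
    · exact Or.inr ⟨s, hs, h⟩

lemma self_mem_flowOrbit (hF : IsFlow F) (p : Plane) : p ∈ flowOrbit F p :=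
  mem_flowOrbit_iff.mpr ⟨0, hF.2.1 p⟩

lemma flowOrbit_shift (hF : IsFlow F) (t : ℝ) (a : Plane) :
    flowOrbit F (F t a) = flowOrbit F a := by
  ext q
  simp only [mem_flowOrbit_iff]
  constructor
  · rintro ⟨s, rfl⟩
    exact ⟨s + t, (hF.2.2 s t a).symm⟩
  · rintro ⟨s, rfl⟩
    exact ⟨s - t, by rw [hF.2.2, sub_add_cancel]⟩

/-- If two points on distinct orbits are prolongationally related, then all pairs of
points on these orbits are. -/
lemma prolong_extend (hF : IsFlow F) {a b : Plane}
    (hne : flowOrbit F a ≠ flowOrbit F b) (hab : (a, b) ∈ prolongRel F) :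
    ∀ p ∈ flowOrbit F a, ∀ q ∈ flowOrbit F b, (p, q) ∈ prolongRel F := by
  obtain ⟨z, hz, hzl⟩ := mem_closure_iff_seq_limit.mp hab
  choose t ht hft using fun n => hz n
  have hx : Tendsto (fun n => (z n).1) atTop (𝓝 a) :=
    (continuous_fst.tendsto _).comp hzl
  have hfx : Tendsto (fun n => F (t n) (z n).1) atTop (𝓝 b) := by
    have := (continuous_snd.tendsto _).comp hzl
    simpa only [Function.comp_def, hft] using this
  by_cases hT : Tendsto t atTop atTop
  · intro p hp q hq
    obtain ⟨s, rfl⟩ := mem_flowOrbit_iff.mp hp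
    obtain ⟨u, rfl⟩ := mem_flowOrbit_iff.mp hq
    have h1 : Tendsto (fun n => F s (z n).1) atTop (𝓝 (F s a)) :=
      ((flow_map_continuous hF s).tendsto a).comp hx
    have h2 : Tendsto (fun n => F (t n + u) (z n).1) atTop (𝓝 (F u b)) := by
      have : Tendsto (fun n => F u (F (t n) (z n).1)) atTop (𝓝 (F u b)) :=
        ((flow_map_continuous hF u).tendsto b).comp hfx
      convert this using 2 with n
      rw [hF.2.2, add_comm]
    have hev : ∀ᶠ n in atTop, (F s (z n).1, F (t n + u) (z n).1) ∈ orbitRel F := by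
      filter_upwards [hT.eventually_ge_atTop (s - u)] with n hn
      refine ⟨t n + u - s, by linarith, ?_⟩
      rw [hF.2.2, sub_add_cancel]
    exact mem_closure_of_tendsto (h1.prodMk_nhds h2) hev
  · exfalso
    rw [tendsto_atTop] at hT
    push_neg at hT
    obtain ⟨M, hM⟩ := hT
    have hM : ∃ᶠ n in atTop, ¬ M ≤ t n := hM.mono fun n hn => not_le.mpr hn
    have hfreq : ∃ᶠ n in atTop, t n ∈ Set.Icc 0 M :=
      hM.mono fun n hn => ⟨ht n, (lt_of_not_ge hn).le⟩
    obtain ⟨t₀, _, φ, hφ, hφt⟩ :=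
      tendsto_subseq_of_frequently_bounded (Metric.isBounded_Icc 0 M) hfreq
    have hlim : Tendsto (fun n => F (t (φ n)) (z (φ n)).1) atTop (𝓝 (F t₀ a)) := by
      have : Tendsto (fun n => ((t (φ n)), (z (φ n)).1)) atTop (𝓝 (t₀, a)) :=
        hφt.prodMk_nhds (hx.comp hφ.tendsto_atTop)
      exact (hF.1.tendsto (t₀, a)).comp this
    have hb : b = F t₀ a :=
      tendsto_nhds_unique (hfx.comp hφ.tendsto_atTop) hlim
    exact hne ((flowOrbit_shift hF t₀ a ▸ (hb ▸ rfl) : flowOrbit F a = flowOrbit F b))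

/-- If neither (a,b) nor (b,a) is in the prolongational relation, the orbits of a and b
can be separated by saturated open sets. -/
lemma separable_of_not_prolong (hF : IsFlow F) {a b : Plane}
    (hab : (a, b) ∉ prolongRel F) (hba : (b, a) ∉ prolongRel F) :
    ¬ OrbitsInseparable F (flowOrbit F a) (flowOrbit F b) := by
  have hopen : IsOpen (prolongRel F)ᶜ := isClosed_closure.isOpen_compl
  obtain ⟨A, B, hA, hB, haA, hbB, hABsub⟩ := isOpen_prod_iff.mp hopen a b hab
  obtain ⟨B', A', hB', hA', hbB', haA', hBAsub⟩ := isOpen_prod_iff.mp hopen b a hba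
  set A₀ := A ∩ A' with hA₀def
  set B₀ := B ∩ B' with hB₀def
  set U : Set Plane := ⋃ t : ℝ, (fun z => F t z) ⁻¹' A₀ with hUdef
  set V : Set Plane := ⋃ t : ℝ, (fun z => F t z) ⁻¹' B₀ with hVdef
  intro hinsep
  have hUo : IsOpen U := isOpen_iUnion fun t =>
    (hA.inter hA').preimage (flow_map_continuous hF t)
  have hVo : IsOpen V := isOpen_iUnion fun t =>
    (hB.inter hB').preimage (flow_map_continuous hF t)
  have hsat : ∀ (S₀ : Set Plane), FlowSaturated F (⋃ t : ℝ, (fun z => F t z) ⁻¹' S₀) := by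
    intro S₀ p hp w hw
    obtain ⟨τ, hτ⟩ := mem_iUnion.mp hp
    obtain ⟨s, rfl⟩ := mem_flowOrbit_iff.mp hw
    refine mem_iUnion.mpr ⟨τ - s, ?_⟩
    show F (τ - s) (F s p) ∈ S₀
    rw [hF.2.2, sub_add_cancel]
    exact hτ
  have hmemU : ∀ (S₀ : Set Plane) (c : Plane), c ∈ S₀ →
      flowOrbit F c ⊆ ⋃ t : ℝ, (fun z => F t z) ⁻¹' S₀ := by
    intro S₀ c hc
    refine (hsat S₀) c (mem_iUnion.mpr ⟨0, ?_⟩)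
    show F 0 c ∈ S₀
    rw [hF.2.1]; exact hc
  obtain ⟨w, hwU, hwV⟩ := hinsep U V hUo hVo (hsat A₀) (hsat B₀)
    (hmemU A₀ a ⟨haA, haA'⟩) (hmemU B₀ b ⟨hbB, hbB'⟩)
  obtain ⟨τ, hτ⟩ := mem_iUnion.mp hwU
  obtain ⟨σ, hσ⟩ := mem_iUnion.mp hwV
  have hτ : F τ w ∈ A₀ := hτ
  have hσ : F σ w ∈ B₀ := hσ
  rcases le_total τ σ with h | h
  · have horb : (F τ w, F σ w) ∈ orbitRel F := by
      refine ⟨σ - τ, by linarith, ?_⟩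
      rw [hF.2.2, sub_add_cancel]
    exact hABsub ⟨hτ.1, hσ.1⟩ (subset_closure horb)
  · have horb : (F σ w, F τ w) ∈ orbitRel F := by
      refine ⟨τ - σ, by linarith, ?_⟩
      rw [hF.2.2, sub_add_cancel]
    exact hBAsub ⟨hσ.2, hτ.2⟩ (subset_closure horb)

end Aux

/-- Two distinct orbits are inseparable iff, possibly after exchanging them, every
point of the first is prolongationally related to every point of the second. -/
theorem stmt_10 (F : ℝ → Plane → Plane) (hF : IsFlow F) (hreg : IsRegularFlow F)
    (a b : Plane) (hne : flowOrbit F a ≠ flowOrbit F b) :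
    OrbitsInseparable F (flowOrbit F a) (flowOrbit F b) ↔
      ((∀ p ∈ flowOrbit F a, ∀ q ∈ flowOrbit F b, (p, q) ∈ prolongRel F) ∨
       (∀ p ∈ flowOrbit F b, ∀ q ∈ flowOrbit F a, (p, q) ∈ prolongRel F)) := by
  constructor
  · intro hinsep
    by_contra hnot
    push_neg at hnot
    obtain ⟨⟨p, hp, q, hq, h1⟩, ⟨p', hp', q', hq', h2⟩⟩ := hnot
    have hab : (a, b) ∉ prolongRel F := fun h => h1 (prolong_extend hF hne h p hp q hq)
    have hba : (b, a) ∉ prolongRel F := fun h =>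
      h2 (prolong_extend hF hne.symm h p' hp' q' hq')
    exact separable_of_not_prolong hF hab hba hinsep
  · rintro (h | h) U₁ U₂ o1 o2 sat1 sat2 sub1 sub2
    · have hab := h a (self_mem_flowOrbit hF a) b (self_mem_flowOrbit hF b)
      obtain ⟨⟨x, y⟩, ⟨hx1, hy2⟩, hxy⟩ := mem_closure_iff.mp hab (U₁ ×ˢ U₂)
        (o1.prod o2) ⟨sub1 (self_mem_flowOrbit hF a), sub2 (self_mem_flowOrbit hF b)⟩
      obtain ⟨t, _, ht⟩ := hxy
      exact ⟨y, sat1 x hx1 (mem_flowOrbit_iff.mpr ⟨t, ht⟩), hy2⟩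
    · have hba := h b (self_mem_flowOrbit hF b) a (self_mem_flowOrbit hF a)
      obtain ⟨⟨x, y⟩, ⟨hx2, hy1⟩, hxy⟩ := mem_closure_iff.mp hba (U₂ ×ˢ U₁)
        (o2.prod o1) ⟨sub2 (self_mem_flowOrbit hF b), sub1 (self_mem_flowOrbit hF a)⟩
      obtain ⟨t, _, ht⟩ := hxy
      exact ⟨y, hy1, sat2 x hx2 (mem_flowOrbit_iff.mpr ⟨t, ht⟩)⟩
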